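/- arXiv:1909.02123 — 4 statements merged into one kernel-verified Lean document; each statement's English description precedes it below -/
import Mathlib

section
/- For positive integers k and s with r = k - s ≥ 1, the alternating sum ∑_{i=0}^{r-1} (-1)^{i+1} · C(s+i, i) · C(s+r, s+i+1) equals -1. -/
open Finset

private lemma prod_eq (s n i : ℕ) (hi : i ≤ n) :
    (s + i).choose i * (s + n).choose (s + i) = n.choose i * (s + n).choose n := by
  have h1 : (s + i).choose i = (s + i).choose s := by
    rw [← Nat.choose_symm (Nat.le_add_left i s)]
    congr 1
    omega
  have h2 := Nat.choose_mul (n := s + n) (k := s + i) (s := s)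
    (Nat.le_add_right s i)
  rw [h1, Nat.mul_comm, h2]
  have h3 : s + n - s = n := by omega
  have h4 : s + i - s = i := by omega
  rw [h3, h4, ← Nat.choose_symm (Nat.le_add_left n s)]
  have h5 : s + n - n = s := by omega
  rw [h5, Nat.mul_comm]

private lemma companion (s n : ℕ) (hn : 1 ≤ n) :
    ∑ i ∈ Finset.range (n + 1),
      (-1 : ℤ) ^ (i + 1) * ((s + i).choose i) * ((s + n).choose (s + i)) = 0 := by
  have key : ∀ i ∈ Finset.range (n + 1),
      (-1 : ℤ) ^ (i + 1) * ((s + i).choose i) * ((s + n).choose (s + i))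
      = (-((s + n).choose n : ℤ)) * ((-1) ^ i * (n.choose i : ℤ)) := by
    intro i hi
    rw [Finset.mem_range] at hi
    have := prod_eq s n i (by omega)
    have hcast : ((s + i).choose i : ℤ) * ((s + n).choose (s + i)) =
        (n.choose i : ℤ) * ((s + n).choose n) := by exact_mod_cast this
    linear_combination (-(-1:ℤ)^i) * hcast
  rw [Finset.sum_congr rfl key, ← Finset.mul_sum, Int.alternating_sum_range_choose,
    if_neg (by omega)]
  simp

/-- For positive integers `k` and `s` with `r = k - s ≥ 1`, the alternating sum
`∑_{i=0}^{r-1} (-1)^{i+1} C(s+i, i) C(s+r, s+i+1)` equals `-1`. -/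
theorem stmt1 (k s r : ℕ) (hk : 0 < k) (hs : 0 < s) (hr : r = k - s) (hr1 : 1 ≤ r) :
    ∑ i ∈ Finset.range r,
      (-1 : ℤ) ^ (i + 1) * ((s + i).choose i) * ((s + r).choose (s + i + 1)) = -1 := by
  clear hr hk
  induction r with
  | zero => omega
  | succ n ih =>
    rcases Nat.eq_or_lt_of_le hr1 with h1 | h1
    · -- n + 1 = 1, i.e. n = 0
      have : n = 0 := by omega
      subst this
      simp
    · have hn : 1 ≤ n := by omega
      have pascal : ∀ i ∈ Finset.range (n + 1),
          (-1 : ℤ) ^ (i + 1) * ((s + i).choose i) * ((s + (n + 1)).choose (s + i + 1))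
          = (-1 : ℤ) ^ (i + 1) * ((s + i).choose i) * ((s + n).choose (s + i))
            + (-1 : ℤ) ^ (i + 1) * ((s + i).choose i) * ((s + n).choose (s + i + 1)) := by
        intro i _
        have : (s + (n + 1)).choose (s + i + 1)
            = (s + n).choose (s + i) + (s + n).choose (s + i + 1) := by
          have : s + (n + 1) = (s + n) + 1 := by omega
          rw [this, Nat.choose_succ_succ]
        rw [this]
        push_cast
        ring
      rw [Finset.sum_congr rfl pascal, Finset.sum_add_distrib, companion s n hn, zero_add,
        Finset.sum_range_succ]
      have hz : (s + n).choose (s + n + 1) = 0 := Nat.choose_eq_zero_of_lt (by omega)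
      rw [hz]
      push_cast
      rw [mul_zero, add_zero]
      exact ih hn
end

section
/- Let μ : ℕ → ℤ be defined recursively by μ(s+1) ≡ -λ (mod n), and for s+1 < m ≤ k, μ(m) ≡ -λ - ∑_{j=s+1}^{m-1} C(m, j) · μ(j) (mod n) (this models the congruence constraints on J-characteristics of an orthogonal array of strength s with index λ). Then for all ℓ with 1 ≤ ℓ ≤ k - s, μ(s+ℓ) ≡ (-1)^ℓ · λ · C(s+ℓ-1, ℓ-1) (mod n). -/
lemma auxA (s : ℕ) : ∀ ℓ, 1 ≤ ℓ →
    ∑ j ∈ Finset.range ℓ, (-1:ℤ)^(j+1) * ((s+ℓ).choose (s+j+1)) * ((s+j).choose s) = -1 := by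
  intro ℓ hℓ
  induction ℓ, hℓ using Nat.le_induction with
  | base => simp
  | succ ℓ hℓ IH =>
    have hpas : ∀ j, (((s+(ℓ+1)).choose (s+j+1)) : ℤ)
        = ((s+ℓ).choose (s+j) : ℤ) + ((s+ℓ).choose (s+j+1) : ℤ) := by
      intro j
      rw [show s+(ℓ+1) = (s+ℓ)+1 by ring, show s+j+1 = (s+j)+1 from rfl,
        Nat.choose_succ_succ]
      push_cast; ring
    calc ∑ j ∈ Finset.range (ℓ+1), (-1:ℤ)^(j+1) * ((s+(ℓ+1)).choose (s+j+1)) * ((s+j).choose s)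
        = (∑ j ∈ Finset.range (ℓ+1), (-1:ℤ)^(j+1) * ((s+ℓ).choose (s+j+1)) * ((s+j).choose s))
          + ∑ j ∈ Finset.range (ℓ+1), (-1:ℤ)^(j+1) * ((s+ℓ).choose (s+j)) * ((s+j).choose s) := by
          rw [← Finset.sum_add_distrib]
          refine Finset.sum_congr rfl fun j _ => ?_
          rw [hpas j]; ring
      _ = -1 + 0 := by
          congr 1
          · rw [Finset.sum_range_succ, Nat.choose_eq_zero_of_lt (by omega), IH]
            push_cast; ring
          · have htri : ∀ j ∈ Finset.range (ℓ+1),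
                (-1:ℤ)^(j+1) * ((s+ℓ).choose (s+j)) * ((s+j).choose s)
                = -((s+ℓ).choose s : ℤ) * ((-1:ℤ)^j * (ℓ.choose j)) := by
              intro j hj
              simp only [Finset.mem_range] at hj
              have := Nat.choose_mul (n := s+ℓ) (k := s+j) (s := s) (by omega)
              have h2 : s + ℓ - s = ℓ := by omega
              have h3 : s + j - s = j := by omega
              rw [h2, h3] at this
              have : ((s+ℓ).choose (s+j) : ℤ) * ((s+j).choose s : ℤ)
                  = ((s+ℓ).choose s : ℤ) * (ℓ.choose j : ℤ) := by exact_mod_cast this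
              calc (-1:ℤ)^(j+1) * ((s+ℓ).choose (s+j)) * ((s+j).choose s)
                  = (-1:ℤ)^(j+1) * (((s+ℓ).choose (s+j) : ℤ) * ((s+j).choose s)) := by ring
                _ = (-1:ℤ)^(j+1) * (((s+ℓ).choose s : ℤ) * (ℓ.choose j : ℤ)) := by rw [this]
                _ = -((s+ℓ).choose s : ℤ) * ((-1:ℤ)^j * (ℓ.choose j)) := by ring
            rw [Finset.sum_congr rfl htri, ← Finset.mul_sum,
              Int.alternating_sum_range_choose_of_ne (by omega), mul_zero]
      _ = -1 := by ring

/-- Let `μ : ℕ → ZMod n` satisfy `μ (s+1) = -λ` and, for `s+1 < m ≤ k`,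
`μ m = -λ - ∑_{j=s+1}^{m-1} C(m, j) * μ j`.  Then for all `1 ≤ ℓ ≤ k - s`,
`μ (s+ℓ) = (-1)^ℓ * λ * C(s+ℓ-1, ℓ-1)` in `ZMod n`. -/
theorem stmt2 (lam n k s : ℕ) (hlam : 0 < lam) (hn : 0 < n) (hs : 0 < s) (hk : s + 1 ≤ k)
    (μ : ℕ → ZMod n)
    (hbase : μ (s + 1) = -(lam : ZMod n))
    (hrec : ∀ m, s + 1 < m → m ≤ k →
      μ m = -(lam : ZMod n) - ∑ j ∈ Finset.Ico (s + 1) m, (m.choose j : ZMod n) * μ j) :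
    ∀ ℓ, 1 ≤ ℓ → ℓ ≤ k - s →
      μ (s + ℓ) = (-1 : ZMod n) ^ ℓ * (lam : ZMod n) * ((s + ℓ - 1).choose (ℓ - 1) : ZMod n) := by
  intro ℓ
  induction ℓ using Nat.strong_induction_on with
  | _ ℓ IH =>
  intro h1 h2
  rcases eq_or_lt_of_le h1 with h | h
  · subst h
    rw [hbase]
    simp
  · obtain ⟨m, rfl⟩ : ∃ m, ℓ = m + 2 := ⟨ℓ - 2, by omega⟩
    have hrec' := hrec (s + (m+2)) (by omega) (by omega)
    rw [Finset.sum_Ico_eq_sum_range, show s + (m+2) - (s+1) = m+1 by omega] at hrec'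
    -- rewrite each summand via IH
    have hterm : ∀ i ∈ Finset.range (m+1),
        (((s+(m+2)).choose (s+1+i)) : ZMod n) * μ (s+1+i)
        = (lam : ZMod n) * ((-1:ZMod n)^(i+1) * ((s+(m+2)).choose (s+i+1)) * ((s+i).choose s)) := by
      intro i hi
      simp only [Finset.mem_range] at hi
      have hIH := IH (i+1) (by omega) (by omega) (by omega)
      rw [show s+1+i = s+(i+1) by ring] at *
      rw [hIH, show s+(i+1)-1 = s+i by omega, show i+1-1 = i by omega,
        show (s+i).choose i = (s+i).choose s by
          rw [← Nat.choose_symm (by omega : s ≤ s+i), Nat.add_sub_cancel_left]]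
      ring
    rw [Finset.sum_congr rfl hterm, ← Finset.mul_sum] at hrec'
    -- integer identity
    have hZ := auxA s (m+2) (by omega)
    rw [Finset.sum_range_succ, show s+(m+1)+1 = s+(m+2) by ring, Nat.choose_self] at hZ
    have hZ' : ∑ j ∈ Finset.range (m+1), (-1:ℤ)^(j+1) * ((s+(m+2)).choose (s+j+1)) * ((s+j).choose s)
        = -1 - (-1:ℤ)^(m+2) * ((s+(m+1)).choose s) := by
      push_cast at hZ ⊢; linarith [hZ]
    have hcast : (∑ i ∈ Finset.range (m+1),
        (-1:ZMod n)^(i+1) * (((s+(m+2)).choose (s+i+1)) : ZMod n) * ((s+i).choose s))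
        = -1 - (-1:ZMod n)^(m+2) * ((s+(m+1)).choose s) := by
      have := congrArg (fun z : ℤ => (z : ZMod n)) hZ'
      push_cast at this
      convert this using 2 <;> push_cast <;> ring
    rw [hcast] at hrec'
    rw [hrec', show s+(m+2)-1 = s+(m+1) by omega, show m+2-1 = m+1 by omega,
      show (s+(m+1)).choose (m+1) = (s+(m+1)).choose s by
        rw [← Nat.choose_symm (by omega : s ≤ s+(m+1)), Nat.add_sub_cancel_left]]
    ring
end

section
/- Let k ≥ 1 and consider the group G(k)^OD generated by G^iso(k,2) = S₂ ≀ S_k together with the operations R_j (j = 1,...,k) acting on {-1,1}^k by R_j(z)_i = z_i·z_j for i ≠ j and R_j(z)_j = z_j. The orbits of the diagonal action of G(k)^OD on {-1,1}^k × {-1,1}^k are O'₀ = {(z,z)} and, for i = 1,...,⌈k/2⌉, O'_i = {(z₁,z₂) : d(z₁,z₂) = i or d(z₁,z₂) = k+1-i}, where d is Hamming distance; in particular there are ⌈k/2⌉ + 1 orbits. -/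
/-- The sign-switch permutation of `{-1,1}^k` multiplying each coordinate by `ε i`. -/
def signFlip (k : ℕ) (ε : Fin k → ℤˣ) : Equiv.Perm (Fin k → ℤˣ) :=
  Function.Involutive.toPerm (fun z i => ε i * z i)
    (by intro z; funext i; simp [← mul_assoc, Int.units_mul_self])

/-- The column permutation of `{-1,1}^k` induced by `σ ∈ S_k`. -/
def colPerm (k : ℕ) (σ : Equiv.Perm (Fin k)) : Equiv.Perm (Fin k → ℤˣ) :=
  Equiv.arrowCongr σ (Equiv.refl ℤˣ)

/-- The operation `R_j` on `{-1,1}^k`: `(R_j z)_i = z_i z_j` for `i ≠ j`, `(R_j z)_j = z_j`. -/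
def negMul (k : ℕ) (j : Fin k) : Equiv.Perm (Fin k → ℤˣ) :=
  Function.Involutive.toPerm (fun z i => if i = j then z j else z i * z j)
    (by
      intro z; funext i
      by_cases h : i = j <;> simp [h, mul_assoc, Int.units_mul_self])

/-- The group `G(k)^OD ≤ Sym({-1,1}^k)` generated by `G^iso(k,2) = S₂ ≀ S_k`
(sign switches and column permutations) together with the operations `R_j`. -/
def GOD (k : ℕ) : Subgroup (Equiv.Perm (Fin k → ℤˣ)) :=
  Subgroup.closure (Set.range (signFlip k) ∪ Set.range (colPerm k) ∪ Set.range (negMul k))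

namespace Stmt18Aux

lemma units_ne_iff (a b : ℤˣ) : a ≠ b ↔ a = -b := by
  rcases Int.units_eq_one_or a with ha | ha <;>
    rcases Int.units_eq_one_or b with hb | hb <;> subst ha <;> subst hb <;> decide

variable {k : ℕ}

lemma signFlip_apply (ε z : Fin k → ℤˣ) (i : Fin k) : signFlip k ε z i = ε i * z i := rfl

lemma colPerm_apply (σ : Equiv.Perm (Fin k)) (z : Fin k → ℤˣ) (i : Fin k) :
    colPerm k σ z i = z (σ.symm i) := rfl

lemma negMul_apply (j : Fin k) (z : Fin k → ℤˣ) (i : Fin k) :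
    negMul k j z i = if i = j then z j else z i * z j := rfl

lemma hd_le (z w : Fin k → ℤˣ) : hammingDist z w ≤ k := by
  simpa using (hammingDist_le_card_fintype (x := z) (y := w))

lemma hd_signFlip (ε z w : Fin k → ℤˣ) :
    hammingDist (signFlip k ε z) (signFlip k ε w) = hammingDist z w := by
  simp only [hammingDist]
  congr 1
  ext i
  simp [signFlip_apply]

lemma hd_colPerm (σ : Equiv.Perm (Fin k)) (z w : Fin k → ℤˣ) :
    hammingDist (colPerm k σ z) (colPerm k σ w) = hammingDist z w := by
  simp only [hammingDist]
  apply Finset.card_equiv σ.symm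
  intro i
  simp only [Finset.mem_filter, Finset.mem_univ, true_and]
  simp [colPerm_apply]

lemma hd_negMul_eq (j : Fin k) (z w : Fin k → ℤˣ) (h : z j = w j) :
    hammingDist (negMul k j z) (negMul k j w) = hammingDist z w := by
  simp only [hammingDist]
  congr 1
  ext i
  simp only [Finset.mem_filter, Finset.mem_univ, true_and, negMul_apply]
  by_cases hij : i = j
  · subst hij; simp [h]
  · simp [hij, h, mul_left_inj]

lemma hd_negMul_ne (j : Fin k) (z w : Fin k → ℤˣ) (h : z j ≠ w j) :
    hammingDist (negMul k j z) (negMul k j w) = k + 1 - hammingDist z w := by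
  have hle := hd_le z w
  have hsum : (Finset.univ.filter fun i => z i ≠ w i).card
      + (Finset.univ.filter fun i => ¬ (z i ≠ w i)).card = k := by
    rw [Finset.card_filter_add_card_filter_not]
    simp
  have hfe : (Finset.univ.filter fun i => negMul k j z i ≠ negMul k j w i)
      = insert j (Finset.univ.filter fun i => z i = w i) := by
    ext i
    simp only [Finset.mem_insert, Finset.mem_filter, Finset.mem_univ, true_and]
    simp only [negMul_apply]
    by_cases hij : i = j
    · simp [hij, h]
    · have hzj : z j = -(w j) := (units_ne_iff _ _).mp h
      rw [if_neg hij, if_neg hij, units_ne_iff, hzj,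
        show -(w i * w j) = w i * -w j by rw [mul_neg], mul_left_inj]
      simp [hij]
  have hnot : (Finset.univ.filter fun i => ¬ (z i ≠ w i))
      = (Finset.univ.filter fun i => z i = w i) := by
    simp [not_not]
  have hjnot : j ∉ (Finset.univ.filter fun i : Fin k => z i = w i) := by simp [h]
  have : hammingDist (negMul k j z) (negMul k j w)
      = (Finset.univ.filter fun i => z i = w i).card + 1 := by
    simp only [hammingDist]
    rw [hfe, Finset.card_insert_of_notMem hjnot]
  rw [this]
  rw [hnot] at hsum
  have hdzw : hammingDist z w = (Finset.univ.filter fun i => z i ≠ w i).card := rfl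
  omega

/-- the invariant min(d, k+1-d) is preserved by every element of `GOD k`. -/
lemma invariant {g : Equiv.Perm (Fin k → ℤˣ)} (hg : g ∈ GOD k) :
    ∀ z w : Fin k → ℤˣ,
    min (hammingDist (g z) (g w)) (k + 1 - hammingDist (g z) (g w))
      = min (hammingDist z w) (k + 1 - hammingDist z w) := by
  induction hg using Subgroup.closure_induction with
  | mem x hx =>
      intro z w
      rcases hx with (hx | hx) | hx
      · obtain ⟨ε, rfl⟩ := hx
        rw [hd_signFlip]
      · obtain ⟨σ, rfl⟩ := hx
        rw [hd_colPerm]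
      · obtain ⟨j, rfl⟩ := hx
        by_cases h : z j = w j
        · rw [hd_negMul_eq _ _ _ h]
        · have hle := hd_le z w
          have hge : 1 ≤ hammingDist z w := by
            rw [Nat.one_le_iff_ne_zero]
            intro h0
            exact h (congrFun (eq_of_hammingDist_eq_zero h0) j)
          rw [hd_negMul_ne _ _ _ h]
          omega
  | one => simp
  | mul x y hx hy ihx ihy =>
      intro z w
      have : ∀ u, (x * y) u = x (y u) := fun u => rfl
      rw [this, this]
      exact (ihx (y z) (y w)).trans (ihy z w)
  | inv x hx ihx =>
      intro z w
      have := ihx (x⁻¹ z) (x⁻¹ w)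
      simpa [Equiv.Perm.coe_inv, Equiv.apply_symm_apply] using this.symm


lemma signFlip_mem (ε : Fin k → ℤˣ) : signFlip k ε ∈ GOD k :=
  Subgroup.subset_closure (Or.inl (Or.inl ⟨ε, rfl⟩))

lemma colPerm_mem (σ : Equiv.Perm (Fin k)) : colPerm k σ ∈ GOD k :=
  Subgroup.subset_closure (Or.inl (Or.inr ⟨σ, rfl⟩))

lemma negMul_mem (j : Fin k) : negMul k j ∈ GOD k :=
  Subgroup.subset_closure (Or.inr ⟨j, rfl⟩)

/-- The canonical vector with `-1` in the first `m` coordinates. -/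
def vv (k m : ℕ) : Fin k → ℤˣ := fun i => if (i : ℕ) < m then -1 else 1

lemma card_filter_lt {m : ℕ} (hm : m ≤ k) :
    (Finset.univ.filter fun i : Fin k => (i : ℕ) < m).card = m := by
  rw [Finset.card_eq_of_bijective (fun n hn => (⟨n, lt_of_lt_of_le hn hm⟩ : Fin k))]
  · intro a ha
    simp only [Finset.mem_filter, Finset.mem_univ, true_and] at ha
    exact ⟨a, ha, rfl⟩
  · intro i hi
    simp [hi]
  · intro i j hi hj hij
    simpa using congrArg Fin.val hij

lemma hd_one_vv {m : ℕ} (hm : m ≤ k) :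
    hammingDist (1 : Fin k → ℤˣ) (vv k m) = m := by
  have hfe : (Finset.univ.filter fun i : Fin k => (1 : Fin k → ℤˣ) i ≠ vv k m i)
      = Finset.univ.filter fun i : Fin k => (i : ℕ) < m := by
    ext i
    simp only [Finset.mem_filter, Finset.mem_univ, true_and, vv, Pi.one_apply]
    by_cases h : (i : ℕ) < m <;> simp [h]
  show (Finset.univ.filter fun i => (1 : Fin k → ℤˣ) i ≠ vv k m i).card = m
  rw [hfe]
  exact card_filter_lt hm

/-- Every pair can be canonicalized to `(1, vv k d)`. -/
lemma canon (p : (Fin k → ℤˣ) × (Fin k → ℤˣ)) :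
    ∃ g ∈ GOD k, g p.1 = 1 ∧ g p.2 = vv k (hammingDist p.1 p.2) := by
  classical
  set m := hammingDist p.1 p.2 with hm
  have hmk : m ≤ k := hd_le _ _
  set g1 := signFlip k p.1 with hg1
  have h11 : g1 p.1 = 1 := by
    funext i
    simp [hg1, signFlip_apply, Int.units_mul_self]
  set w := g1 p.2 with hw
  have hdw : hammingDist (1 : Fin k → ℤˣ) w = m := by
    rw [← h11, hw, hg1, hd_signFlip]
  -- build the sorting permutation
  have hcard : Fintype.card {i : Fin k // (1 : Fin k → ℤˣ) i ≠ w i}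
      = Fintype.card {i : Fin k // (i : ℕ) < m} := by
    rw [Fintype.card_subtype, Fintype.card_subtype, card_filter_lt hmk]
    exact hdw
  set e := Fintype.equivOfCardEq hcard with he
  set σ := e.extendSubtype with hσ
  have hmem : ∀ i, (1 : Fin k → ℤˣ) i ≠ w i ↔ (σ i : ℕ) < m := by
    intro i
    constructor
    · intro hi; exact e.extendSubtype_mem i hi
    · intro hi
      by_contra hni
      exact e.extendSubtype_not_mem i (not_ne_iff.mpr hni) hi
  refine ⟨colPerm k σ * g1, mul_mem (colPerm_mem σ) (signFlip_mem p.1), ?_, ?_⟩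
  · show colPerm k σ (g1 p.1) = 1
    rw [h11]
    funext i
    simp [colPerm_apply]
  · show colPerm k σ (g1 p.2) = vv k m
    funext i
    rw [colPerm_apply, ← hw]
    have := hmem (σ.symm i)
    rw [Equiv.apply_symm_apply] at this
    simp only [Pi.one_apply] at this
    by_cases hi : (i : ℕ) < m
    · have hne : (1 : ℤˣ) ≠ w (σ.symm i) := this.mpr hi
      have hwi : w (σ.symm i) = -1 := by
        rcases Int.units_eq_one_or (w (σ.symm i)) with h1 | h1
        · exact absurd h1.symm hne
        · exact h1
      rw [hwi, vv, if_pos hi]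
    · have heq : (1 : ℤˣ) = w (σ.symm i) := by
        by_contra hne
        exact hi (this.mp hne)
      rw [← heq, vv, if_neg hi]

end Stmt18Aux

open Stmt18Aux

/-- The orbits of the diagonal action of `G(k)^OD` on `{-1,1}^k × {-1,1}^k` are the
diagonal `{(z,z)}` and, for `i = 1,…,⌈k/2⌉`, the classes
`{(z₁,z₂) : d(z₁,z₂) ∈ {i, k+1-i}}`: two pairs lie in the same orbit iff their Hamming
distances agree or sum to `k+1`; in particular there are `⌈k/2⌉ + 1` orbits. -/
theorem stmt18 (k : ℕ) (hk : 1 ≤ k) :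
    (∀ p q : (Fin k → ℤˣ) × (Fin k → ℤˣ),
      (∃ g ∈ GOD k, g p.1 = q.1 ∧ g p.2 = q.2)
        ↔ (hammingDist p.1 p.2 = hammingDist q.1 q.2 ∨
            hammingDist p.1 p.2 + hammingDist q.1 q.2 = k + 1)) ∧
    Set.ncard {O : Set ((Fin k → ℤˣ) × (Fin k → ℤˣ)) |
        ∃ p : (Fin k → ℤˣ) × (Fin k → ℤˣ),
          O = {q | ∃ g ∈ GOD k, g p.1 = q.1 ∧ g p.2 = q.2}}
      = (k + 1) / 2 + 1 := by
  classical
  have part1 : ∀ p q : (Fin k → ℤˣ) × (Fin k → ℤˣ),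
      (∃ g ∈ GOD k, g p.1 = q.1 ∧ g p.2 = q.2)
        ↔ (hammingDist p.1 p.2 = hammingDist q.1 q.2 ∨
            hammingDist p.1 p.2 + hammingDist q.1 q.2 = k + 1) := by
    intro p q
    constructor
    · rintro ⟨g, hg, h1, h2⟩
      have hinv := invariant hg p.1 p.2
      rw [h1, h2] at hinv
      have hp := hd_le p.1 p.2
      have hq := hd_le q.1 q.2
      omega
    · intro hpq
      obtain ⟨g1, hg1, hg11, hg12⟩ := canon p
      obtain ⟨g2, hg2, hg21, hg22⟩ := canon q
      rcases hpq with heq | hsum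
      · refine ⟨g2⁻¹ * g1, mul_mem (inv_mem hg2) hg1, ?_, ?_⟩
        · show g2⁻¹ (g1 p.1) = q.1
          rw [hg11, ← hg21, Equiv.Perm.inv_def, Equiv.symm_apply_apply]
        · show g2⁻¹ (g1 p.2) = q.2
          rw [hg12, heq, ← hg22, Equiv.Perm.inv_def, Equiv.symm_apply_apply]
      · set m := hammingDist p.1 p.2 with hm
        have hqk := hd_le q.1 q.2
        have hm1 : 1 ≤ m := by omega
        have hmk : m ≤ k := hd_le _ _
        set j : Fin k := ⟨0, hk⟩ with hj
        set R := negMul k j with hR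
        have hR1 : R (1 : Fin k → ℤˣ) = 1 := by
          funext i
          by_cases h : i = j <;> simp [hR, negMul_apply, h]
        have hne : (1 : Fin k → ℤˣ) j ≠ vv k m j := by
          have : vv k m j = -1 := by
            simp only [vv, hj]
            rw [if_pos (show (0:ℕ) < m from hm1)]
          rw [this, Pi.one_apply]
          decide
        have hdR : hammingDist (R (1 : Fin k → ℤˣ)) (R (vv k m)) = k + 1 - m := by
          rw [hR, hd_negMul_ne j _ _ hne, hd_one_vv hmk]
        obtain ⟨g3, hg3, hg31, hg32⟩ := canon ((R (1 : Fin k → ℤˣ)), R (vv k m))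
        dsimp only at hg31 hg32
        rw [hdR] at hg32
        have hq2 : hammingDist q.1 q.2 = k + 1 - m := by omega
        refine ⟨g2⁻¹ * (g3 * (R * g1)),
          mul_mem (inv_mem hg2) (mul_mem hg3 (mul_mem (negMul_mem j) hg1)), ?_, ?_⟩
        · show g2⁻¹ (g3 (R (g1 p.1))) = q.1
          rw [hg11, hg31, ← hg21, Equiv.Perm.inv_def, Equiv.symm_apply_apply]
        · show g2⁻¹ (g3 (R (g1 p.2))) = q.2
          rw [hg12, hg32, ← hq2, ← hg22, Equiv.Perm.inv_def, Equiv.symm_apply_apply]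
  refine ⟨part1, ?_⟩
  set C : ℕ → Set ((Fin k → ℤˣ) × (Fin k → ℤˣ)) :=
    fun m => {q | min (hammingDist q.1 q.2) (k + 1 - hammingDist q.1 q.2) = m} with hC
  have horb : ∀ p : (Fin k → ℤˣ) × (Fin k → ℤˣ),
      {q | ∃ g ∈ GOD k, g p.1 = q.1 ∧ g p.2 = q.2}
        = C (min (hammingDist p.1 p.2) (k + 1 - hammingDist p.1 p.2)) := by
    intro p
    ext q
    rw [Set.mem_setOf_eq, part1 p q]
    have hp := hd_le p.1 p.2
    have hq := hd_le q.1 q.2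
    simp only [hC, Set.mem_setOf_eq]
    omega
  have hmemC : ∀ m, m ≤ (k + 1) / 2 → ((1 : Fin k → ℤˣ), vv k m) ∈ C m := by
    intro m hm
    have hmk : m ≤ k := by omega
    simp only [hC, Set.mem_setOf_eq]
    rw [hd_one_vv hmk]
    omega
  have hSet : {O : Set ((Fin k → ℤˣ) × (Fin k → ℤˣ)) |
        ∃ p : (Fin k → ℤˣ) × (Fin k → ℤˣ),
          O = {q | ∃ g ∈ GOD k, g p.1 = q.1 ∧ g p.2 = q.2}}
      = C '' Set.Iic ((k + 1) / 2) := by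
    ext O
    simp only [Set.mem_setOf_eq, Set.mem_image, Set.mem_Iic]
    constructor
    · rintro ⟨p, rfl⟩
      refine ⟨min (hammingDist p.1 p.2) (k + 1 - hammingDist p.1 p.2), ?_, (horb p).symm⟩
      have := hd_le p.1 p.2
      omega
    · rintro ⟨m, hm, rfl⟩
      have hmk : m ≤ k := by omega
      refine ⟨((1 : Fin k → ℤˣ), vv k m), ?_⟩
      rw [horb]
      dsimp only
      rw [hd_one_vv hmk]
      have hmin : min m (k + 1 - m) = m := by omega
      rw [hmin]
  have hinj : Set.InjOn C (Set.Iic ((k + 1) / 2)) := by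
    intro m1 hm1 m2 hm2 h12
    rw [Set.mem_Iic] at hm1 hm2
    have h1 := hmemC m1 hm1
    rw [h12] at h1
    simp only [hC, Set.mem_setOf_eq] at h1
    rw [hd_one_vv (show m1 ≤ k by omega)] at h1
    omega
  rw [hSet, Set.ncard_image_of_injOn hinj, ← Finset.coe_Iic, Set.ncard_coe_finset,
    Nat.card_Iic]
end

section
/- For positive integers k, s with s even, s < k, n = 2, and any index λ, every feasible frequency vector x of an OA(λ2^s, k, 2, s) satisfies: if J_u^x = 0 for all u with |u| = m for some even m ≥ s+2, then (under the action of the group G(k)^OD preserving the feasible set) also J_{u''}^x = 0 for all u'' with |u''| = m - 1. Concretely: the transformation R_j maps the J-characteristic indexed by an even-size set ℓ with j ∈ ℓ to the J-characteristic indexed by ℓ\{j\} (up to sign), so vanishing of all even-level J-characteristics at level m forces vanishing at level m-1 for all frequency vectors in the feasible set. -/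
/-- `x` is the frequency vector of an `OA(λ2^s, k, 2, s)` (in the `J`-characteristic
formulation): the total count is `λ 2^s` and all `J`-characteristics of levels `1,…,s`
vanish. -/
def OAFeasible (k s lam : ℕ) (x : (Fin k → ℤˣ) → ℕ) : Prop :=
  (∑ z : Fin k → ℤˣ, x z = lam * 2 ^ s) ∧
  ∀ u : Finset (Fin k), u.Nonempty → u.card ≤ s →
    ∑ z : Fin k → ℤˣ, (x z : ℤ) * ∏ j ∈ u, (z j : ℤ) = 0

section Aux

variable {k : ℕ}

lemma aux_sq (w : ℤˣ) : ((w : ℤ)) * (w : ℤ) = 1 := by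
  rcases Int.units_eq_one_or w with h | h <;> simp [h]

lemma aux_pow_even (w : ℤˣ) {c : ℕ} (hc : Even c) : ((w : ℤ)) ^ c = 1 := by
  obtain ⟨n, rfl⟩ := hc
  rw [show n + n = 2 * n by ring, pow_mul, sq, aux_sq, one_pow]

lemma aux_pow_odd (w : ℤˣ) {c : ℕ} (hc : Odd c) : ((w : ℤ)) ^ c = (w : ℤ) := by
  obtain ⟨n, rfl⟩ := hc
  rw [pow_succ, show 2 * n = n + n by ring, aux_pow_even w ⟨n, rfl⟩, one_mul]

/-- The operation `R_j`. -/
def Rj (j : Fin k) (z : Fin k → ℤˣ) : Fin k → ℤˣ :=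
  fun i => if i = j then z j else z i * z j

lemma Rj_invol (j : Fin k) : Function.Involutive (Rj j) := by
  intro z
  funext i
  by_cases hi : i = j
  · simp [Rj, hi]
  · show (if i = j then _ else (if i = j then z j else z i * z j) * (if j = j then z j else _)) = z i
    rw [if_neg hi, if_neg hi, if_pos rfl, mul_assoc]
    have : z j * z j = 1 := by
      rcases Int.units_eq_one_or (z j) with h | h <;> simp [h]
    rw [this, mul_one]

lemma Rj_prod (j : Fin k) (w : Fin k → ℤˣ) (v : Finset (Fin k)) :
    ∏ i ∈ v, ((Rj j w i : ℤˣ) : ℤ)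
      = (∏ i ∈ v, ((w i : ℤˣ) : ℤ)) *
        ((w j : ℤ)) ^ (v.card + if j ∈ v then 1 else 0) := by
  have herase : ∀ t : Finset (Fin k), j ∉ t →
      ∏ i ∈ t, ((Rj j w i : ℤˣ) : ℤ)
        = (∏ i ∈ t, ((w i : ℤˣ) : ℤ)) * ((w j : ℤ)) ^ t.card := by
    intro t ht
    rw [← Finset.prod_const, ← Finset.prod_mul_distrib]
    apply Finset.prod_congr rfl
    intro i hi
    have hij : i ≠ j := fun h => ht (h ▸ hi)
    simp [Rj, hij]
  by_cases hj : j ∈ v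
  · rw [if_pos hj]
    rw [← Finset.mul_prod_erase v _ hj, ← Finset.mul_prod_erase v (fun i => ((w i : ℤˣ) : ℤ)) hj]
    rw [herase _ (Finset.notMem_erase j v)]
    have hRjj : ((Rj j w j : ℤˣ) : ℤ) = (w j : ℤ) := by simp [Rj]
    rw [hRjj]
    have hc : (v.erase j).card = v.card - 1 := Finset.card_erase_of_mem hj
    have hpos : 1 ≤ v.card := Finset.card_pos.mpr ⟨j, hj⟩
    have hc2 : v.card + 1 = (v.erase j).card + 2 := by omega
    rw [hc2, pow_add, sq, aux_sq, mul_one]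
    ring
  · rw [if_neg hj, add_zero]
    exact herase v hj

lemma Rj_sum (j : Fin k) (x : (Fin k → ℤˣ) → ℕ) (v : Finset (Fin k)) :
    ∑ z : Fin k → ℤˣ, ((x (Rj j z) : ℤ)) * ∏ i ∈ v, ((z i : ℤˣ) : ℤ)
      = ∑ w : Fin k → ℤˣ, ((x w : ℤ)) * ∏ i ∈ v, ((Rj j w i : ℤˣ) : ℤ) := by
  apply Fintype.sum_bijective (Rj j) (Rj_invol j).bijective
  intro z
  simp [Rj_invol j z]

lemma Rj_feasible {s lam : ℕ} (hs : Even s) (j : Fin k) (x : (Fin k → ℤˣ) → ℕ)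
    (hx : OAFeasible k s lam x) : OAFeasible k s lam (fun z => x (Rj j z)) := by
  constructor
  · rw [← hx.1]
    exact Fintype.sum_bijective (Rj j) (Rj_invol j).bijective _ _ (fun z => rfl)
  · intro v hv hvs
    rw [Rj_sum j x v]
    simp_rw [Rj_prod j _ v]
    rcases Nat.even_or_odd (v.card + if j ∈ v then 1 else 0) with hc | hc
    · simp_rw [aux_pow_even _ hc, mul_one]
      exact hx.2 v hv hvs
    · simp_rw [aux_pow_odd _ hc, ← mul_assoc]
      by_cases hj : j ∈ v
      · have hvceven : Even v.card := by
          rw [if_pos hj] at hc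
          rcases hc with ⟨b, hb⟩
          exact ⟨b, by omega⟩
        have hv2 : 2 ≤ v.card := by
          have := Finset.card_pos.mpr ⟨j, hj⟩
          rcases hvceven with ⟨n, hn⟩; omega
        have key : ∀ w : Fin k → ℤˣ,
            (∏ i ∈ v, ((w i : ℤˣ) : ℤ)) * ((w j : ℤ)) = ∏ i ∈ v.erase j, ((w i : ℤˣ) : ℤ) := by
          intro w
          rw [← Finset.mul_prod_erase v (fun i => ((w i : ℤˣ) : ℤ)) hj,
            mul_comm ((w j : ℤ)) _, mul_assoc, aux_sq, mul_one]
        simp_rw [mul_assoc, key]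
        refine hx.2 (v.erase j) ?_ ?_
        · rw [← Finset.card_pos, Finset.card_erase_of_mem hj]; omega
        · rw [Finset.card_erase_of_mem hj]; omega
      · rw [if_neg hj, add_zero] at hc
        have key : ∀ w : Fin k → ℤˣ,
            (∏ i ∈ v, ((w i : ℤˣ) : ℤ)) * ((w j : ℤ)) = ∏ i ∈ insert j v, ((w i : ℤˣ) : ℤ) := by
          intro w
          rw [Finset.prod_insert hj, mul_comm]
        simp_rw [mul_assoc, key]
        refine hx.2 (insert j v) (Finset.insert_nonempty j v) ?_
        rw [Finset.card_insert_of_notMem hj]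
        rcases hs with ⟨a, ha⟩; rcases hc with ⟨b, hb⟩; omega

end Aux

/-- For `n = 2` and even strength `s`: if every feasible frequency vector `x` of an
`OA(λ2^s, k, 2, s)` has all its `J`-characteristics of some even level `m ≥ s + 2`
equal to zero, then every feasible frequency vector also has all of its
`J`-characteristics of level `m - 1` equal to zero. -/
theorem stmt19 (k s lam m : ℕ) (hs : Even s) (hsk : s < k) (hm : Even m)
    (hms : s + 2 ≤ m) (hmk : m ≤ k)
    (hlevel : ∀ x : (Fin k → ℤˣ) → ℕ, OAFeasible k s lam x →
      ∀ u : Finset (Fin k), u.card = m →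
        ∑ z : Fin k → ℤˣ, (x z : ℤ) * ∏ j ∈ u, (z j : ℤ) = 0) :
    ∀ x : (Fin k → ℤˣ) → ℕ, OAFeasible k s lam x →
      ∀ u : Finset (Fin k), u.card = m - 1 →
        ∑ z : Fin k → ℤˣ, (x z : ℤ) * ∏ j ∈ u, (z j : ℤ) = 0 := by
  intro x hx u hu
  -- pick j ∉ u
  have hune : u ≠ Finset.univ := by
    intro h
    rw [h, Finset.card_univ, Fintype.card_fin] at hu
    omega
  obtain ⟨j, hj⟩ : ∃ j, j ∉ u := by
    by_contra h
    push_neg at h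
    exact hune (Finset.eq_univ_of_forall h)
  have hcard : (insert j u).card = m := by
    rw [Finset.card_insert_of_notMem hj, hu]; omega
  have h0 := hlevel (fun z => x (Rj j z)) (Rj_feasible hs j x hx) (insert j u) hcard
  rw [Rj_sum j x (insert j u)] at h0
  simp_rw [Rj_prod j _ (insert j u)] at h0
  have hcodd : Odd ((insert j u).card + if j ∈ insert j u then 1 else 0) := by
    rw [hcard, if_pos (Finset.mem_insert_self j u)]
    exact hm.add_one
  simp_rw [aux_pow_odd _ hcodd] at h0
  have key : ∀ w : Fin k → ℤˣ,
      (∏ i ∈ insert j u, ((w i : ℤˣ) : ℤ)) * ((w j : ℤ)) = ∏ i ∈ u, ((w i : ℤˣ) : ℤ) := by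
    intro w
    rw [Finset.prod_insert hj, mul_comm ((w j : ℤ)) _, mul_assoc, aux_sq, mul_one]
  simp_rw [← mul_assoc, mul_assoc, key] at h0
  exact h0
end
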